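/- arXiv:2506.12018 — 2 statements merged into one kernel-verified Lean document; each statement's English description precedes it below -/
import Mathlib

section
/- Let A be a unital C*-algebra and μ, λ positive linear functionals on A with N_λ ⊆ N_μ, where N_τ = {a : τ(a*a) = 0}. Let π_λ be the GNS representation of λ. Then there is a well-defined positive linear functional μ' on the C*-algebra π_λ(A) satisfying μ'(π_λ(a)) = μ(a) for all a ∈ A, and ‖μ'‖ = ‖μ‖. -/
open ComplexOrder

section Aux

variable {A : Type*} [CStarAlgebra A]

private lemma pos_key (μ : A →L[ℂ] ℂ) (hμ : ∀ a : A, 0 ≤ μ (star a * a)) (a : A) (t : ℂ) :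
    0 ≤ μ 1 + t * μ a + (starRingEnd ℂ) t * μ (star a)
      + ((starRingEnd ℂ) t * t) * μ (star a * a) := by
  have h := hμ (1 + t • a)
  have hexp : star (1 + t • a) * (1 + t • a)
      = 1 + t • a + (starRingEnd ℂ) t • star a
        + ((starRingEnd ℂ) t * t) • (star a * a) := by
    rw [star_add, star_smul, star_one, add_mul, mul_add, mul_add,
      smul_mul_smul_comm, RCLike.star_def]
    simp only [one_mul, mul_one]
    abel
  rw [hexp] at h
  simpa [map_add, map_smul, smul_eq_mul] using h

private lemma herm (μ : A →L[ℂ] ℂ) (hμ : ∀ a : A, 0 ≤ μ (star a * a)) (a : A) :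
    μ (star a) = (starRingEnd ℂ) (μ a) := by
  have hu : (μ 1).im = 0 := by
    have := hμ 1
    rw [star_one, one_mul] at this
    exact (Complex.nonneg_iff.mp this).2.symm
  have hc : (μ (star a * a)).im = 0 := (Complex.nonneg_iff.mp (hμ a)).2.symm
  have h1 := (Complex.nonneg_iff.mp (pos_key μ hμ a 1)).2
  have hI := (Complex.nonneg_iff.mp (pos_key μ hμ a Complex.I)).2
  simp [Complex.add_im, Complex.mul_im, hu, hc, Complex.conj_re, Complex.conj_im] at h1 hI
  have : True := trivial
  apply Complex.ext
  · rw [Complex.conj_re]; linarith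
  · rw [Complex.conj_im]; linarith


private lemma cs (μ : A →L[ℂ] ℂ) (hμ : ∀ a : A, 0 ≤ μ (star a * a)) (a : A) :
    ‖μ a‖ ^ 2 ≤ (μ 1).re * (μ (star a * a)).re := by
  have hu : 0 ≤ (μ 1).re := by
    have := hμ 1
    rw [star_one, one_mul] at this
    exact (Complex.nonneg_iff.mp this).1
  have hcre : 0 ≤ (μ (star a * a)).re := (Complex.nonneg_iff.mp (hμ a)).1
  rcases eq_or_ne (μ a) 0 with hm | hm
  · simpa [hm] using mul_nonneg hu hcre
  · have hs := herm μ hμ a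
    set m := μ a with hm_def
    set c := μ (star a * a) with hc_def
    have hcim : c.im = 0 := (Complex.nonneg_iff.mp (hμ a)).2.symm
    have key : ∀ r : ℝ, 0 ≤ (c.re * Complex.normSq m) * (r * r)
        + (-(2 * Complex.normSq m)) * r + (μ 1).re := by
      intro r
      have h := pos_key μ hμ a (-(r : ℂ) * (starRingEnd ℂ) m)
      rw [hs] at h
      have hrw : μ 1 + (-(r : ℂ) * (starRingEnd ℂ) m) * m
          + (starRingEnd ℂ) (-(r : ℂ) * (starRingEnd ℂ) m) * (starRingEnd ℂ) m
          + ((starRingEnd ℂ) (-(r : ℂ) * (starRingEnd ℂ) m) * (-(r : ℂ) * (starRingEnd ℂ) m)) * c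
          = μ 1 + (((-(2 * Complex.normSq m)) * r : ℝ) : ℂ)
            + (((Complex.normSq m * (r * r) : ℝ)) : ℂ) * c := by
        simp only [map_mul, map_neg, Complex.conj_conj, Complex.conj_ofReal]
        push_cast
        simp only [Complex.normSq_eq_conj_mul_self]
        ring
      rw [hrw] at h
      have := (Complex.nonneg_iff.mp h).1
      simp only [Complex.add_re, Complex.ofReal_re, Complex.mul_re, Complex.ofReal_im,
        hcim, mul_zero, zero_mul, sub_zero] at this
      linarith
    have hdisc := discrim_le_zero key
    rw [discrim] at hdisc
    have hnsq : 0 < Complex.normSq m := Complex.normSq_pos.mpr hm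
    have hn : ‖m‖ ^ 2 = Complex.normSq m := by
      rw [Complex.sq_norm]
    rw [hn]
    nlinarith [hdisc, hnsq]

private lemma sqrt_trick {c : A} (hc : IsSelfAdjoint c) (f : ℝ → ℝ)
    (hf : ∀ s, 0 ≤ f s) (hcont : Continuous f) :
    star (cfc (fun s => Real.sqrt (f s)) c) * cfc (fun s => Real.sqrt (f s)) c = cfc f c := by
  have h1 : IsSelfAdjoint (cfc (fun s => Real.sqrt (f s)) c) := cfc_predicate _ c
  rw [h1.star_eq, ← cfc_mul _ _ c (by fun_prop) (by fun_prop)]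
  exact cfc_congr fun s _ => Real.mul_self_sqrt (hf s)

private lemma dom {B : Type*} [CStarAlgebra B] (μ : A →L[ℂ] ℂ)
    (hμ : ∀ a : A, 0 ≤ μ (star a * a)) (rep : A →⋆ₐ[ℂ] B)
    (hker : ∀ e : A, rep e = 0 → μ (star e * e) = 0) (a : A) :
    (μ (star a * a)).re ≤ ‖rep a‖ ^ 2 * (μ 1).re := by
  have hu : 0 ≤ (μ 1).re := by
    have := hμ 1
    rw [star_one, one_mul] at this
    exact (Complex.nonneg_iff.mp this).1
  rcases subsingleton_or_nontrivial B with hB | hB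
  · have h0 : μ (star a * a) = 0 := hker a (Subsingleton.elim _ _)
    rw [h0]
    simpa using mul_nonneg (sq_nonneg ‖rep a‖) hu
  haveI : NormOneClass B := inferInstance
  set c := star a * a with hc_def
  have hc : IsSelfAdjoint c := IsSelfAdjoint.star_mul_self a
  set t := ‖rep a‖ ^ 2 with ht_def
  have hrep_cont : Continuous rep :=
    AddMonoidHomClass.continuous_of_bound rep 1
      (fun x => by simpa using NonUnitalStarAlgHom.norm_apply_le rep x)
  have hrepc : IsSelfAdjoint (rep c) := hc.map rep
  set g : ℝ → ℝ := fun s => min s t with hg_def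
  set h : ℝ → ℝ := fun s => max (s - t) 0 with hh_def
  have hgh : ∀ s : ℝ, g s + h s = s := by
    intro s
    rcases le_total s t with hst | hst
    · rw [hg_def, hh_def]
      simp only [min_eq_left hst, max_eq_right (sub_nonpos.2 hst), add_zero]
    · rw [hg_def, hh_def]
      simp only [min_eq_right hst, max_eq_left (sub_nonneg.2 hst)]
      ring
  have hsplit : c = cfc g c + cfc h c := by
    conv_lhs => rw [← cfc_id ℝ c hc]
    rw [← cfc_add c g h (by fun_prop) (by fun_prop)]
    exact cfc_congr fun s _ => (hgh s).symm
  -- the `h` part is killed by `rep`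
  have hrep_d : rep (cfc h c) = 0 := by
    rw [rep.map_cfc h c (by fun_prop) hrep_cont hc hrepc]
    have h0 : (spectrum ℝ (rep c)).EqOn h 0 := by
      intro s hs
      have hle : s ≤ t := by
        calc s ≤ ‖s‖ := Real.le_norm_self s
        _ ≤ ‖rep c‖ := spectrum.norm_le_norm_of_mem hs
        _ = t := by
            rw [hc_def, map_mul, map_star, CStarRing.norm_star_mul_self, ht_def, sq]
      simp only [hh_def, Pi.zero_apply, max_eq_right (sub_nonpos.2 hle)]
    rw [cfc_congr h0]
    exact cfc_zero ℝ _
  have hμd : μ (cfc h c) = 0 := by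
    set e := cfc (fun s => Real.sqrt (h s)) c with he_def
    have he : star e * e = cfc h c :=
      sqrt_trick hc h (fun s => le_max_right _ _) (by fun_prop)
    have hrepe : rep e = 0 := by
      rw [← CStarRing.star_mul_self_eq_zero_iff (rep e), ← map_star, ← map_mul, he, hrep_d]
    rw [← he]
    exact hker e hrepe
  -- the `g` part is dominated by `t • 1`
  have hb : 0 ≤ μ (algebraMap ℝ A t - cfc g c) := by
    have hk : algebraMap ℝ A t - cfc g c = cfc (fun s => t - g s) c := by
      rw [cfc_sub (fun _ : ℝ => t) g c (by fun_prop) (by fun_prop), cfc_const t c hc]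
    rw [hk, ← sqrt_trick hc (fun s => t - g s)
      (fun s => sub_nonneg.2 (min_le_right s t)) (by fun_prop)]
    exact hμ _
  have halg : μ (algebraMap ℝ A t) = (t : ℂ) * μ 1 := by
    rw [IsScalarTower.algebraMap_apply ℝ ℂ A, Algebra.algebraMap_eq_smul_one, map_smul]
    simp [smul_eq_mul]
  have hle : μ (cfc g c) ≤ (t : ℂ) * μ 1 := by
    rw [← sub_nonneg, ← halg, ← map_sub]
    exact hb
  have hfinal : μ c = μ (cfc g c) := by
    conv_lhs => rw [hsplit]
    rw [map_add, hμd, add_zero]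
  rw [hfinal]
  have := (Complex.le_def.mp hle).1
  simpa using this

end Aux

set_option maxHeartbeats 1000000 in
set_option synthInstance.maxHeartbeats 400000 in
/-- Let `μ`, `lam` be positive linear functionals on a unital
C*-algebra `A` with `N_lam ⊆ N_μ`, and let `π_lam` (given by the Hilbert space
`H = L²(lam)`, the star representation `rep` and the cyclic vector `xi = 1 + N_lam`)
be the GNS representation of `lam`.  Then there is a well-defined positive
linear functional `μ'` on the C*-algebra `π_lam (A)` satisfying
`μ' (π_lam a) = μ a` for all `a ∈ A`, and `‖μ'‖ = ‖μ‖`. -/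
theorem transfer_functional_exists
    {A : Type*} [NormedRing A] [StarRing A] [CStarRing A] [CompleteSpace A]
    [NormedAlgebra ℂ A] [StarModule ℂ A] [NormOneClass A]
    (lam μ : A →L[ℂ] ℂ)
    (hlam : ∀ a : A, 0 ≤ lam (star a * a)) (hμ : ∀ a : A, 0 ≤ μ (star a * a))
    (hN : ∀ a : A, lam (star a * a) = 0 → μ (star a * a) = 0)
    -- the GNS representation of `lam`:
    (H : Type*) [NormedAddCommGroup H] [InnerProductSpace ℂ H] [CompleteSpace H]
    (rep : A →⋆ₐ[ℂ] (H →L[ℂ] H)) (xi : H)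
    (hstate : ∀ a : A, lam a = inner (𝕜 := ℂ) xi (rep a xi))
    (hcyclic : (Submodule.span ℂ (Set.range fun a : A => rep a xi)).topologicalClosure = ⊤) :
    ∃ μ' : (LinearMap.range rep.toLinearMap : Submodule ℂ (H →L[ℂ] H)) →L[ℂ] ℂ,
      (∀ a : A, μ' ⟨rep a, ⟨a, rfl⟩⟩ = μ a) ∧
      (∀ a : A, 0 ≤ μ' ⟨rep (star a * a), ⟨star a * a, rfl⟩⟩) ∧
      ‖μ'‖ = ‖μ‖ := by
  letI : CStarAlgebra A :=
    { ‹NormedRing A›, ‹StarRing A›, ‹CStarRing A›, ‹NormedAlgebra ℂ A›,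
      ‹StarModule ℂ A› with toCompleteSpace := ‹_› }
  letI : CStarAlgebra (H →L[ℂ] H) :=
    { (inferInstance : NormedRing (H →L[ℂ] H)), (inferInstance : StarRing (H →L[ℂ] H)),
      (inferInstance : CStarRing (H →L[ℂ] H)),
      (inferInstance : NormedAlgebra ℂ (H →L[ℂ] H)),
      (inferInstance : StarModule ℂ (H →L[ℂ] H)) with
      toCompleteSpace := inferInstance }
  have hker0 : ∀ e : A, rep e = 0 → μ (star e * e) = 0 := by
    intro e he
    apply hN
    rw [hstate, map_mul]
    simp [he]
  have hbound : ∀ a : A, ‖μ a‖ ≤ ‖μ‖ * ‖rep a‖ := by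
    intro a
    have h1 := cs μ hμ a
    have h2 := dom μ hμ rep hker0 a
    have hu : 0 ≤ (μ 1).re := by
      have := hμ 1
      rw [star_one, one_mul] at this
      exact (Complex.nonneg_iff.mp this).1
    have hu' : (μ 1).re ≤ ‖μ‖ := by
      calc (μ 1).re ≤ ‖μ 1‖ := Complex.re_le_norm (μ 1)
      _ ≤ ‖μ‖ * ‖(1 : A)‖ := μ.le_opNorm 1
      _ = ‖μ‖ := by rw [norm_one, mul_one]
    have hsq : ‖μ a‖ ^ 2 ≤ (‖μ‖ * ‖rep a‖) ^ 2 := by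
      nlinarith [mul_le_mul_of_nonneg_left h2 hu,
        mul_le_mul hu' hu' hu (norm_nonneg μ), sq_nonneg ‖rep a‖,
        mul_le_mul_of_nonneg_left (mul_le_mul hu' hu' hu (norm_nonneg μ)) (sq_nonneg ‖rep a‖)]
    have hs := Real.sqrt_le_sqrt hsq
    rwa [Real.sqrt_sq (norm_nonneg _),
      Real.sqrt_sq (mul_nonneg (norm_nonneg μ) (norm_nonneg (rep a)))] at hs
  have hkerμ : ∀ a : A, rep a = 0 → μ a = 0 := by
    intro a ha
    have := hbound a
    rw [ha, norm_zero, mul_zero] at this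
    exact norm_le_zero_iff.mp this
  set K := LinearMap.ker rep.toLinearMap with hK
  have hKle : K ≤ LinearMap.ker (μ : A →ₗ[ℂ] ℂ) := by
    intro x hx
    rw [LinearMap.mem_ker] at hx ⊢
    exact hkerμ x hx
  set q : (A ⧸ K) →ₗ[ℂ] ℂ := K.liftQ (μ : A →ₗ[ℂ] ℂ) hKle with hq
  set eqv := LinearMap.quotKerEquivRange (rep.toLinearMap : A →ₗ[ℂ] (H →L[ℂ] H)) with heqv
  set g : (LinearMap.range rep.toLinearMap : Submodule ℂ (H →L[ℂ] H)) →ₗ[ℂ] ℂ :=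
    q ∘ₗ (eqv.symm : (LinearMap.range rep.toLinearMap : Submodule ℂ (H →L[ℂ] H)) →ₗ[ℂ] (A ⧸ K))
    with hgdef
  have hg : ∀ a : A, g ⟨rep a, ⟨a, rfl⟩⟩ = μ a := by
    intro a
    have h1 : eqv (Submodule.Quotient.mk a) = ⟨rep a, ⟨a, rfl⟩⟩ := by
      apply Subtype.ext
      simp [heqv, LinearMap.quotKerEquivRange]
    have h2 : eqv.symm ⟨rep a, ⟨a, rfl⟩⟩ = Submodule.Quotient.mk a := by
      rw [← h1, LinearEquiv.symm_apply_apply]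
    show q (eqv.symm ⟨rep a, ⟨a, rfl⟩⟩) = μ a
    rw [h2]
    rfl
  have hgc : ∀ x : (LinearMap.range rep.toLinearMap : Submodule ℂ (H →L[ℂ] H)),
      ‖g x‖ ≤ ‖μ‖ * ‖x‖ := by
    rintro ⟨x, a, rfl⟩
    show ‖g ⟨rep a, ⟨a, rfl⟩⟩‖ ≤ ‖μ‖ * ‖rep a‖
    rw [hg a]
    exact hbound a
  refine ⟨g.mkContinuous ‖μ‖ hgc, fun a => hg a, fun a => ?_, ?_⟩
  · show (0 : ℂ) ≤ g ⟨rep (star a * a), ⟨star a * a, rfl⟩⟩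
    rw [hg (star a * a)]
    exact hμ a
  · refine le_antisymm (g.mkContinuous_norm_le (norm_nonneg μ) hgc) ?_
    refine ContinuousLinearMap.opNorm_le_bound μ (norm_nonneg (g.mkContinuous ‖μ‖ hgc)) fun a => ?_
    calc ‖μ a‖ = ‖g.mkContinuous ‖μ‖ hgc ⟨rep a, ⟨a, rfl⟩⟩‖ := by
          rw [LinearMap.mkContinuous_apply, hg a]
    _ ≤ ‖g.mkContinuous ‖μ‖ hgc‖ * ‖(⟨rep a, ⟨a, rfl⟩⟩ :
          (LinearMap.range rep.toLinearMap : Submodule ℂ (H →L[ℂ] H)))‖ :=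
        ContinuousLinearMap.le_opNorm _ _
    _ ≤ ‖g.mkContinuous ‖μ‖ hgc‖ * ‖a‖ := by
        have h' : ‖(⟨rep a, ⟨a, rfl⟩⟩ :
            (LinearMap.range rep.toLinearMap : Submodule ℂ (H →L[ℂ] H)))‖ ≤ ‖a‖ :=
          NonUnitalStarAlgHom.norm_apply_le rep a
        exact mul_le_mul_of_nonneg_left h' (norm_nonneg (g.mkContinuous ‖μ‖ hgc))
end

section
/- Let λ be a positive linear functional on a unital C*-algebra A. The set WS[λ] of positive linear functionals on A that are weak*-singular with respect to λ is a hereditary cone in the positive cone of A*: if 0 ≤ ν ≤ μ and μ ∈ WS[λ], then ν ∈ WS[λ]. -/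
open ComplexOrder

variable {A : Type*} [NormedRing A] [StarRing A] [CStarRing A] [CompleteSpace A]
  [NormedAlgebra ℂ A] [StarModule ℂ A] [NormOneClass A]
  {H : Type*} [NormedAddCommGroup H] [InnerProductSpace ℂ H] [CompleteSpace H]

/-- A linear functional on a C*-algebra is positive if it is nonnegative on
elements of the form `a* a`. -/
def IsPosPLF (μ : A →L[ℂ] ℂ) : Prop := ∀ a : A, 0 ≤ μ (star a * a)

/-- The order on (positive) linear functionals: `μ ≤ ν`. -/
def PLFLe (μ ν : A →L[ℂ] ℂ) : Prop := ∀ a : A, 0 ≤ ν (star a * a) - μ (star a * a)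

/-- `(rep, H, xi)` is the GNS representation of the positive linear functional
`lam`: `lam` is the vector state at the cyclic vector `xi = 1 + N_lam`. -/
def IsGNSRep (lam : A →L[ℂ] ℂ) (rep : A →⋆ₐ[ℂ] (H →L[ℂ] H)) (xi : H) : Prop :=
  (∀ a : A, lam a = inner (𝕜 := ℂ) xi (rep a xi)) ∧
  (Submodule.span ℂ (Set.range fun a : A => rep a xi)).topologicalClosure = ⊤

/-- `μ` is weak*-continuous with respect to `lam` (whose GNS representation on
`H = L²(lam)` is `rep`): `μ` extends to a weak*-continuous (normal) positive
linear functional on the von Neumann algebra `L^∞(lam) = rep(A)''`,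
equivalently `μ` is given by a square-summable sequence of vectors of `L²(lam)`
via `μ a = ∑ₖ ⟪ξₖ, rep a ξₖ⟫`. -/
def IsWStarCont (rep : A →⋆ₐ[ℂ] (H →L[ℂ] H)) (μ : A →L[ℂ] ℂ) : Prop :=
  ∃ ξ : ℕ → H, Summable (fun k => ‖ξ k‖ ^ 2) ∧
    ∀ a : A, μ a = ∑' k, inner (𝕜 := ℂ) (ξ k) (rep a (ξ k))

/-- `μ` is weak*-singular with respect to `lam`: no (positive extension of) `μ`
majorizes a non-zero weak*-continuous positive linear functional. -/
def IsWStarSing (rep : A →⋆ₐ[ℂ] (H →L[ℂ] H)) (μ : A →L[ℂ] ℂ) : Prop :=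
  ∀ ν : A →L[ℂ] ℂ, IsPosPLF ν → IsWStarCont rep ν → PLFLe ν μ → ν = 0

/-- The set `WS[lam]` of positive linear functionals on `A`
that are weak*-singular with respect to `lam` is a hereditary cone in the
positive cone of `A*`: if `0 ≤ ν ≤ μ` and `μ ∈ WS[lam]`, then `ν ∈ WS[lam]`. -/
theorem weakStarSingular_hereditary
    (lam : A →L[ℂ] ℂ) (hlam : IsPosPLF lam)
    (rep : A →⋆ₐ[ℂ] (H →L[ℂ] H)) (xi : H) (hGNS : IsGNSRep lam rep xi)
    (μ ν : A →L[ℂ] ℂ) (hμ : IsPosPLF μ) (hν : IsPosPLF ν)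
    (hle : PLFLe ν μ) (hsing : IsWStarSing rep μ) :
    IsWStarSing rep ν := by
  intro ρ hρpos hρcont hρle
  refine hsing ρ hρpos hρcont fun a => ?_
  have h := add_nonneg (hle a) (hρle a)
  rwa [sub_add_sub_cancel] at h
end
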